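/- For all positive integers n and all x in a commutative ring (or field of rational functions in q), the Newton interpolation identity holds: sum_{i=1}^n [n choose i]_q * (-1)^{i-1} * (x+1)(x+q)...(x+q^{i-1}) / (1-q^i) * q^i = sum_{i=1}^n (-1)^{i-1} (x^i - (-1)^i) q^i / (1-q^i). -/
import Mathlib


open Finset

variable {F : Type*} [Field F]

/-- `(q;q)_n = (1-q)(1-q^2)...(1-q^n)` -/
def qfac (q : F) (n : ℕ) : F := ∏ j ∈ Finset.range n, (1 - q ^ (j + 1))

/-- `(z;q)_k = (1-z)(1-zq)...(1-zq^{k-1})` -/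
def qpoch (z q : F) (k : ℕ) : F := ∏ j ∈ Finset.range k, (1 - z * q ^ j)

/-- Gaussian binomial coefficient `[n choose k]_q` -/
def qbinom (q : F) (n k : ℕ) : F := qfac q n / (qfac q k * qfac q (n - k))

/-- Sum over weakly increasing `m`-tuples `lo ≤ i_1 ≤ ... ≤ i_m ≤ n` of
`∏_j q^{i_j}/(1-q^{i_j})` (equal to `1` when `m = 0`). -/
def chainSum (q : F) (lo n m : ℕ) : F :=
  ∑ c ∈ Finset.univ.filter (fun c : Fin m → Fin (n + 1) =>
      (∀ j k : Fin m, j ≤ k → c j ≤ c k) ∧ ∀ j, lo ≤ (c j : ℕ)),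
    ∏ j, q ^ (c j : ℕ) / (1 - q ^ (c j : ℕ))

/-- Complete homogeneous symmetric function `h_m` of the variables
`x lo, x (lo+1), ..., x n`. -/
def hSum {R : Type*} [CommRing R] (x : ℕ → R) (lo n m : ℕ) : R :=
  ∑ c ∈ Finset.univ.filter (fun c : Fin m → Fin (n + 1) =>
      (∀ j k : Fin m, j ≤ k → c j ≤ c k) ∧ ∀ j, lo ≤ (c j : ℕ)),
    ∏ j, x (c j : ℕ)

private def B (q : F) : ℕ → ℕ → F
  | _, 0 => 1
  | 0, _ + 1 => 0
  | n + 1, k + 1 => B q n k + q ^ (k + 1) * B q n (k + 1)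

@[simp] private lemma B_zero (q : F) (n : ℕ) : B q n 0 = 1 := by cases n <;> rfl

private lemma B_succ (q : F) (n k : ℕ) :
    B q (n+1) (k+1) = B q n k + q ^ (k+1) * B q n (k+1) := rfl

private lemma B_of_lt (q : F) {n k : ℕ} (h : n < k) : B q n k = 0 := by
  induction n generalizing k with
  | zero => obtain ⟨k, rfl⟩ : ∃ m, k = m + 1 := ⟨k - 1, by omega⟩; rfl
  | succ n ih =>
      obtain ⟨k, rfl⟩ : ∃ m, k = m + 1 := ⟨k - 1, by omega⟩
      rw [B_succ, ih (by omega), ih (by omega)]; ring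

@[simp] private lemma B_self (q : F) (n : ℕ) : B q n n = 1 := by
  induction n with
  | zero => rfl
  | succ n ih => rw [B_succ, ih, B_of_lt q (by omega)]; ring

private lemma qfac_zero (q : F) : qfac q 0 = 1 := by simp [qfac]

private lemma qfac_succ (q : F) (n : ℕ) :
    qfac q (n+1) = qfac q n * (1 - q ^ (n+1)) := Finset.prod_range_succ _ _

private lemma B_mul_qfac (q : F) {n k : ℕ} (h : k ≤ n) :
    B q n k * (qfac q k * qfac q (n - k)) = qfac q n := by
  induction n generalizing k with
  | zero => interval_cases k; simp [qfac_zero]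
  | succ n ih =>
    rcases k with _ | k
    · simp [qfac_zero]
    rcases eq_or_lt_of_le h with h' | h'
    · obtain rfl : k = n := by omega
      simp [qfac_zero]
    · obtain ⟨m, rfl⟩ : ∃ m, n = k + 1 + m := ⟨n - (k+1), by omega⟩
      have h1 := ih (k := k) (by omega)
      have h2 := ih (k := k + 1) (by omega)
      have e1 : k + 1 + m - k = m + 1 := by omega
      have e2 : k + 1 + m - (k + 1) = m := by omega
      have e3 : k + 1 + m + 1 - (k + 1) = m + 1 := by omega
      rw [e1] at h1; rw [e2] at h2; rw [e3, B_succ]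
      rw [qfac_succ q m] at h1
      rw [qfac_succ q k] at h2
      rw [qfac_succ q k, qfac_succ q m, qfac_succ q (k+1+m)]
      linear_combination (1 - q^(k+1)) * h1 + q^(k+1) * (1 - q^(m+1)) * h2

private lemma qfac_ne_zero {q : F} {N : ℕ} (hq : ∀ i ∈ Icc 1 N, q ^ i ≠ 1)
    {m : ℕ} (h : m ≤ N) : qfac q m ≠ 0 := by
  unfold qfac
  rw [Finset.prod_ne_zero_iff]
  intro j hj
  simp only [Finset.mem_range] at hj
  exact sub_ne_zero_of_ne (Ne.symm (hq (j+1) (Finset.mem_Icc.mpr ⟨by omega, by omega⟩)))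

private lemma B_ratio (q : F) {n k : ℕ} (hk : k ≤ n)
    (hfac : ∀ m, m ≤ n + 1 → qfac q m ≠ 0) :
    B q n k * (1 - q ^ (n+1)) = B q (n+1) (k+1) * (1 - q ^ (k+1)) := by
  have hD : qfac q k * qfac q (n - k) ≠ 0 :=
    mul_ne_zero (hfac _ (by omega)) (hfac _ (by omega))
  apply mul_right_cancel₀ hD
  have h1 := B_mul_qfac q hk
  have h2 := B_mul_qfac q (show k + 1 ≤ n + 1 by omega)
  have e : n + 1 - (k + 1) = n - k := by omega
  rw [e, qfac_succ q k, qfac_succ q n] at h2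
  linear_combination (1 - q^(n+1)) * h1 - h2

private lemma B_pascal (q : F) {n k : ℕ} (hk : k ≤ n)
    (hfac : ∀ m, m ≤ n + 1 → qfac q m ≠ 0) :
    B q (n+1) (k+1) = B q n (k+1) + q ^ (n - k) * B q n k := by
  rcases eq_or_lt_of_le hk with rfl | h
  · simp [B_of_lt q (show k < k + 1 by omega)]
  · obtain ⟨m, rfl⟩ : ∃ m, n = k + 1 + m := ⟨n - (k+1), by omega⟩
    have hD : qfac q (k+1) * qfac q (m+1) ≠ 0 :=
      mul_ne_zero (hfac _ (by omega)) (hfac _ (by omega))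
    apply mul_right_cancel₀ hD
    have h1 := B_mul_qfac q (show k + 1 ≤ k + 1 + m + 1 by omega)
    have h2 := B_mul_qfac q (show k + 1 ≤ k + 1 + m by omega)
    have h3 := B_mul_qfac q (show k ≤ k + 1 + m by omega)
    have e1 : k + 1 + m + 1 - (k + 1) = m + 1 := by omega
    have e2 : k + 1 + m - (k + 1) = m := by omega
    have e3 : k + 1 + m - k = m + 1 := by omega
    rw [e1] at h1; rw [e2] at h2; rw [e3]
    rw [e3] at h3
    rw [qfac_succ q k, qfac_succ q m, qfac_succ q (k+1+m)] at h1
    rw [qfac_succ q k] at h2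
    rw [qfac_succ q m] at h3
    rw [qfac_succ q k, qfac_succ q m]
    linear_combination h1 - (1 - q^(m+1)) * h2 - q^(m+1) * (1 - q^(k+1)) * h3

private lemma qbinom_eq_B {q : F} {n k : ℕ} (hk : k ≤ n)
    (hfac : ∀ m, m ≤ n → qfac q m ≠ 0) :
    qfac q n / (qfac q k * qfac q (n - k)) = B q n k := by
  rw [div_eq_iff (mul_ne_zero (hfac _ hk) (hfac _ (by omega)))]
  exact (B_mul_qfac q hk).symm

private lemma keyB (q x : F) (n : ℕ) :
    ∑ i ∈ range (n+1), (-1 : F) ^ i * B q n i * ∏ j ∈ range i, (x + q ^ j) = (-x) ^ n := by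
  induction n with
  | zero => simp
  | succ n ih =>
    rw [Finset.sum_range_succ']
    simp only [pow_zero, B_zero, range_zero, prod_empty, mul_one, one_mul]
    have e1 : ∑ k ∈ range (n+1), (-1:F)^(k+1) * B q (n+1) (k+1) * ∏ j ∈ range (k+1), (x + q^j)
        = (∑ k ∈ range (n+1), (-1:F)^(k+1) * B q n k * ∏ j ∈ range (k+1), (x + q^j))
          + ∑ k ∈ range (n+1), (-1:F)^(k+1) * q^(k+1) * B q n (k+1) * ∏ j ∈ range (k+1), (x + q^j) := by
      rw [← Finset.sum_add_distrib]
      refine Finset.sum_congr rfl fun k _ => ?_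
      rw [B_succ]; ring
    have e2 : ∑ k ∈ range (n+1), (-1:F)^(k+1) * B q n k * ∏ j ∈ range (k+1), (x + q^j)
        = -x * (∑ k ∈ range (n+1), (-1:F)^k * B q n k * ∏ j ∈ range k, (x + q^j))
          - ∑ k ∈ range (n+1), (-1:F)^k * q^k * B q n k * ∏ j ∈ range k, (x + q^j) := by
      rw [Finset.mul_sum, ← Finset.sum_sub_distrib]
      refine Finset.sum_congr rfl fun k _ => ?_
      rw [Finset.prod_range_succ]; ring
    have e3 : ∑ k ∈ range (n+1), (-1:F)^(k+1) * q^(k+1) * B q n (k+1) * ∏ j ∈ range (k+1), (x + q^j)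
        = (∑ k ∈ range (n+1), (-1:F)^k * q^k * B q n k * ∏ j ∈ range k, (x + q^j)) - 1 := by
      have h0 : ∑ i ∈ range (n+2), (-1:F)^i * q^i * B q n i * ∏ j ∈ range i, (x + q^j)
          = ∑ i ∈ range (n+1), (-1:F)^i * q^i * B q n i * ∏ j ∈ range i, (x + q^j) := by
        rw [Finset.sum_range_succ, B_of_lt q (by omega)]; ring
      rw [Finset.sum_range_succ'] at h0
      simp only [pow_zero, B_zero, range_zero, prod_empty, mul_one, one_mul] at h0
      linear_combination h0
    rw [e1, e2, e3, ih]
    ring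

private lemma sum_Icc_one (g : ℕ → F) (m : ℕ) :
    ∑ i ∈ Icc 1 m, g i = ∑ k ∈ range m, g (k+1) := by
  induction m with
  | zero => simp
  | succ m ih => rw [Finset.sum_Icc_succ_top (by omega), ih, Finset.sum_range_succ]

private lemma stepB (q x : F) (n : ℕ) (hq : ∀ i ∈ Icc 1 (n+1), q ^ i ≠ 1) :
    ∑ i ∈ Icc 1 (n+1), B q (n+1) i * ((-1:F)^(i+1) * ∏ j ∈ range i, (x + q^j)) / (1 - q^i) * q^i
      = (∑ i ∈ Icc 1 n, B q n i * ((-1:F)^(i+1) * ∏ j ∈ range i, (x + q^j)) / (1 - q^i) * q^i)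
        + (1 - (-x)^(n+1)) * q^(n+1) / (1 - q^(n+1)) := by
  have hfac : ∀ m, m ≤ n + 1 → qfac q m ≠ 0 := fun m hm => qfac_ne_zero hq hm
  have hne : ∀ i, 1 ≤ i → i ≤ n + 1 → (1 : F) - q ^ i ≠ 0 := fun i h1 h2 =>
    sub_ne_zero_of_ne (Ne.symm (hq i (Finset.mem_Icc.mpr ⟨h1, h2⟩)))
  rw [sum_Icc_one (fun i => B q (n+1) i * ((-1:F)^(i+1) * ∏ j ∈ range i, (x + q^j)) / (1 - q^i) * q^i),
      sum_Icc_one (fun i => B q n i * ((-1:F)^(i+1) * ∏ j ∈ range i, (x + q^j)) / (1 - q^i) * q^i)]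
  have hmid : ∑ k ∈ range n, B q n (k+1) * ((-1:F)^(k+1+1) * ∏ j ∈ range (k+1), (x + q^j)) / (1 - q^(k+1)) * q^(k+1)
      = ∑ k ∈ range (n+1), B q n (k+1) * ((-1:F)^(k+1+1) * ∏ j ∈ range (k+1), (x + q^j)) / (1 - q^(k+1)) * q^(k+1) := by
    rw [Finset.sum_range_succ, B_of_lt q (by omega)]
    ring
  rw [hmid]
  have hterm : ∀ k ∈ range (n+1),
      B q (n+1) (k+1) * ((-1:F)^(k+1+1) * ∏ j ∈ range (k+1), (x + q^j)) / (1 - q^(k+1)) * q^(k+1)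
      = B q n (k+1) * ((-1:F)^(k+1+1) * ∏ j ∈ range (k+1), (x + q^j)) / (1 - q^(k+1)) * q^(k+1)
        + ((-1:F)^(k+1) * B q (n+1) (k+1) * ∏ j ∈ range (k+1), (x + q^j))
            * (-(q^(n+1) / (1 - q^(n+1)))) := by
    intro k hk
    have hk' : k ≤ n := by simp only [Finset.mem_range] at hk; omega
    have hp := B_pascal q hk' hfac
    have hr := B_ratio q hk' hfac
    obtain ⟨m, rfl⟩ : ∃ m, n = k + m := ⟨n - k, by omega⟩
    have e : k + m - k = m := by omega
    rw [e] at hp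
    have d1 : (1:F) - q^(k+1) ≠ 0 := hne _ (by omega) (by omega)
    have dn : (1:F) - q^(k+m+1) ≠ 0 := hne _ (by omega) (by omega)
    rw [← sub_eq_iff_eq_add']
    have hL : B q (k+m+1) (k+1) * ((-1:F)^(k+1+1) * ∏ j ∈ range (k+1), (x + q^j)) / (1 - q^(k+1)) * q^(k+1)
        - B q (k+m) (k+1) * ((-1:F)^(k+1+1) * ∏ j ∈ range (k+1), (x + q^j)) / (1 - q^(k+1)) * q^(k+1)
        = ((B q (k+m+1) (k+1) - B q (k+m) (k+1)) * ((-1:F)^(k+1+1) * ∏ j ∈ range (k+1), (x + q^j)) * q^(k+1))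
            / (1 - q^(k+1)) := by ring
    have hA : B q (k+m+1) (k+1) - B q (k+m) (k+1) = q^m * B q (k+m) k := by linear_combination hp
    have hR : ((-1:F)^(k+1) * B q (k+m+1) (k+1) * ∏ j ∈ range (k+1), (x + q^j))
          * (-(q^(k+m+1) / (1 - q^(k+m+1))))
        = (-((-1:F)^(k+1) * B q (k+m+1) (k+1) * (∏ j ∈ range (k+1), (x + q^j)) * q^(k+m+1)))
            / (1 - q^(k+m+1)) := by ring
    rw [hL, hA, hR, div_eq_div_iff d1 dn]
    linear_combination ((-1:F)^k * (∏ j ∈ range (k+1), (x + q^j)) * q^(k+1) * q^m) * hr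
  rw [Finset.sum_congr rfl hterm, Finset.sum_add_distrib, ← Finset.sum_mul]
  have hkey : ∑ k ∈ range (n+1), (-1:F)^(k+1) * B q (n+1) (k+1) * ∏ j ∈ range (k+1), (x + q^j)
      = (-x)^(n+1) - 1 := by
    have h := keyB q x (n+1)
    rw [Finset.sum_range_succ'] at h
    simp only [pow_zero, B_zero, range_zero, prod_empty, mul_one, one_mul] at h
    linear_combination h
  rw [hkey]
  ring

theorem fu_lascoux_eq1_m1' (q x : F) (n : ℕ)
    (hq : ∀ i ∈ Finset.Icc 1 n, q ^ i ≠ 1) :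
    ∑ i ∈ Finset.Icc 1 n,
        (qfac q n / (qfac q i * qfac q (n - i))) * ((-1) ^ (i + 1) * ∏ j ∈ Finset.range i, (x + q ^ j)) / (1 - q ^ i) * q ^ i
      = ∑ i ∈ Finset.Icc 1 n, (-1) ^ (i + 1) * (x ^ i - (-1) ^ i) * q ^ i / (1 - q ^ i) := by
  induction n with
  | zero => simp
  | succ n ih =>
    have hq' : ∀ i ∈ Icc 1 n, q ^ i ≠ 1 := fun i hi => by
      simp only [Finset.mem_Icc] at hi
      exact hq i (Finset.mem_Icc.mpr ⟨hi.1, by omega⟩)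
    have hfacN : ∀ m, m ≤ n + 1 → qfac q m ≠ 0 := fun m hm => qfac_ne_zero hq hm
    have hL1 : ∑ i ∈ Icc 1 (n+1),
          (qfac q (n+1) / (qfac q i * qfac q (n+1-i))) * ((-1:F)^(i+1) * ∏ j ∈ range i, (x + q^j)) / (1 - q^i) * q^i
        = ∑ i ∈ Icc 1 (n+1), B q (n+1) i * ((-1:F)^(i+1) * ∏ j ∈ range i, (x + q^j)) / (1 - q^i) * q^i := by
      refine Finset.sum_congr rfl fun i hi => ?_
      simp only [Finset.mem_Icc] at hi
      rw [qbinom_eq_B hi.2 hfacN]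
    have hL2 : ∑ i ∈ Icc 1 n,
          (qfac q n / (qfac q i * qfac q (n-i))) * ((-1:F)^(i+1) * ∏ j ∈ range i, (x + q^j)) / (1 - q^i) * q^i
        = ∑ i ∈ Icc 1 n, B q n i * ((-1:F)^(i+1) * ∏ j ∈ range i, (x + q^j)) / (1 - q^i) * q^i := by
      refine Finset.sum_congr rfl fun i hi => ?_
      simp only [Finset.mem_Icc] at hi
      rw [qbinom_eq_B hi.2 (fun m hm => hfacN m (by omega))]
    rw [hL1, stepB q x n hq, ← hL2, ih hq',
        Finset.sum_Icc_succ_top (show 1 ≤ n + 1 by omega)]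
    congr 1
    have he : ((-1 : F)) ^ (n+1) * (-1) ^ (n+1) = 1 := by
      rw [← pow_add]
      exact Even.neg_one_pow ⟨n + 1, by ring⟩
    rw [neg_pow]
    linear_combination (-(q^(n+1) / (1 - q^(n+1)))) * he

theorem fu_lascoux_eq1_m1 (q x : F) (n : ℕ) (hn : 1 ≤ n)
    (hq : ∀ i ∈ Finset.Icc 1 n, q ^ i ≠ 1) :
    ∑ i ∈ Finset.Icc 1 n,
        qbinom q n i * ((-1) ^ (i + 1) * ∏ j ∈ Finset.range i, (x + q ^ j)) / (1 - q ^ i) * q ^ i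
      = ∑ i ∈ Finset.Icc 1 n, (-1) ^ (i + 1) * (x ^ i - (-1) ^ i) * q ^ i / (1 - q ^ i) := by
  have := fu_lascoux_eq1_m1' q x n hq
  simpa only [qbinom] using this
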